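/- Let G be a finite solvable group with nilpotent derived subgroup. If V is an irreducible G-module that is G-isomorphic to a non-Frattini (complemented) chief factor of G, then dim_{End_G(V)} V = 1. -/

import Mathlib

namespace PaperCF

variable {G : Type*} [Group G]

/-- The image `A = X/Y` of `X` in the quotient `G/Y`. -/
def factor (Y X : Subgroup G) [Y.Normal] : Subgroup (G ⧸ Y) :=
  X.map (QuotientGroup.mk' Y)

/-- `f` is a `G`-endomorphism of the factor `X/Y ≤ G/Y`: it maps `X/Y` to
itself, is additive on `X/Y`, and commutes with the conjugation action of `G`. -/
def IsGEnd (Y X : Subgroup G) [Y.Normal] (f : G ⧸ Y → G ⧸ Y) : Prop :=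
  (∀ a ∈ factor Y X, f a ∈ factor Y X) ∧
  (∀ a b, a ∈ factor Y X → b ∈ factor Y X → f (a * b) = f a * f b) ∧
  (∀ q : G ⧸ Y, ∀ a ∈ factor Y X, f (q * a * q⁻¹) = q * f a * q⁻¹)

/-- An `F`-subspace of the chief factor `X/Y`, where `F = End_G(X/Y)`:
a subgroup of `X/Y` stable under all `G`-endomorphisms of `X/Y`. -/
def IsFSub (Y X : Subgroup G) [Y.Normal] (W : Subgroup (G ⧸ Y)) : Prop :=
  ∀ f : G ⧸ Y → G ⧸ Y, IsGEnd Y X f → ∀ w ∈ W, f w ∈ W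

/-- `W` is spanned over `F = End_G(X/Y)` by `γ` elements (i.e. `dim_F W ≤ γ`). -/
def SpannedBy (Y X : Subgroup G) [Y.Normal] (γ : ℕ) (W : Subgroup (G ⧸ Y)) : Prop :=
  ∃ z : Fin γ → G ⧸ Y, (∀ i, z i ∈ factor Y X) ∧
    W = sInf {W' : Subgroup (G ⧸ Y) |
      W' ≤ factor Y X ∧ IsFSub Y X W' ∧ ∀ i, z i ∈ W'}

/-- The centralizer `C_G(W)` in `G` of a subset `W` of `G/Y`. -/
def CG (Y : Subgroup G) [Y.Normal] (W : Subgroup (G ⧸ Y)) : Subgroup G :=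
  (Subgroup.centralizer (W : Set (G ⧸ Y))).comap (QuotientGroup.mk' Y)

/-- The chief factor `X/Y` of `G` is a `γ`-module: for every `F`-subspace `W`
of `X/Y` (`F = End_G(X/Y)`) there exists an `F`-subspace `W*` with
`dim_F W* ≤ γ` and `C_G(W) = C_G(W*) ∩ ⋂_{M ∈ 𝓜_W} M`, where `𝓜_W` is the set
of maximal subgroups of `G` containing `C_G(W)`. -/
def IsGammaModule (Y X : Subgroup G) [Y.Normal] (γ : ℕ) : Prop :=
  ∀ W : Subgroup (G ⧸ Y), W ≤ factor Y X → IsFSub Y X W →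
    ∃ Wstar : Subgroup (G ⧸ Y), Wstar ≤ factor Y X ∧ IsFSub Y X Wstar ∧
      SpannedBy Y X γ Wstar ∧
      CG Y W = CG Y Wstar ⊓ ⨅ M ∈ {M : Subgroup G | IsCoatom M ∧ CG Y W ≤ M}, M

/-- `X/Y` is a chief factor of `G`. -/
def IsChiefFactor (Y X : Subgroup G) : Prop :=
  Y.Normal ∧ X.Normal ∧ Y < X ∧
    ∀ N : Subgroup G, N.Normal → Y ≤ N → N ≤ X → N = Y ∨ N = X

/-- The chief factor `X/Y` is complemented (non-Frattini). -/
def IsComplemented' (Y X : Subgroup G) : Prop :=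
  ∃ K : Subgroup G, K ⊔ X = ⊤ ∧ K ⊓ X = Y

end PaperCF

open PaperCF
open scoped commutatorElement

section AuxProofs

variable {G : Type*} [Group G]

private lemma aux_nilpotent_eq_bot {H : Type*} [Group H] (N K : Subgroup H)
    (hN : Group.IsNilpotent ↥N) (hKN : K ≤ N) (h : ⁅N, K⁆ = K) : K = ⊥ := by
  obtain ⟨n, hn⟩ := Subgroup.nilpotent_iff_lowerCentralSeries.mp hN
  have key : ∀ m, K ≤ ((⊤ : Subgroup ↥N).lowerCentralSeries m).map N.subtype := by
    intro m
    induction m with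
    | zero =>
      simpa [Subgroup.lowerCentralSeries_zero, ← MonoidHom.range_eq_map, Subgroup.range_subtype] using hKN
    | succ m ih =>
      calc K = ⁅N, K⁆ := h.symm
        _ ≤ ⁅N, ((⊤ : Subgroup ↥N).lowerCentralSeries m).map N.subtype⁆ := Subgroup.commutator_mono le_rfl ih
        _ = ⁅((⊤ : Subgroup ↥N).lowerCentralSeries m).map N.subtype, N⁆ := Subgroup.commutator_comm _ _
        _ = ((⊤ : Subgroup ↥N).lowerCentralSeries (m+1)).map N.subtype := by
            have hls : (⊤ : Subgroup ↥N).lowerCentralSeries (m+1) =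
                ⁅(⊤ : Subgroup ↥N).lowerCentralSeries m, (⊤ : Subgroup ↥N)⁆ := rfl
            rw [hls, Subgroup.map_commutator, ← MonoidHom.range_eq_map,
              Subgroup.range_subtype]
  have := key n
  rw [hn] at this
  simpa using this

/-- In the quotient `G ⧸ Y`, the factor `X/Y` of a chief factor is minimal normal
(or trivial): any normal subgroup of `G ⧸ Y` contained in it is `⊥` or everything. -/
private lemma chief_min (Y X : Subgroup G) [Y.Normal] [X.Normal]
    (hchief : IsChiefFactor Y X) :
    ∀ P : Subgroup (G ⧸ Y), P.Normal → P ≤ factor Y X → P = ⊥ ∨ P = factor Y X := by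
  intro P hP hPle
  obtain ⟨_, _, hlt, hmin⟩ := hchief
  have hYX : Y ≤ X := hlt.le
  set π := QuotientGroup.mk' Y with hπ
  have hsurj : Function.Surjective π := QuotientGroup.mk'_surjective Y
  have hker : π.ker = Y := QuotientGroup.ker_mk' Y
  have hcomapK : (factor Y X).comap π = X := by
    rw [factor, Subgroup.comap_map_eq, hker, sup_eq_left.mpr hYX]
  have hQn : (P.comap π).Normal := Subgroup.Normal.comap hP π
  have hQY : Y ≤ P.comap π := by
    intro y hy
    have h1 : π y = 1 := by rw [← MonoidHom.mem_ker, hker]; exact hy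
    show π y ∈ P
    rw [h1]; exact P.one_mem
  have hQX : P.comap π ≤ X := hcomapK ▸ Subgroup.comap_mono hPle
  have hPmc : (P.comap π).map π = P := Subgroup.map_comap_eq_self_of_surjective hsurj P
  rcases hmin (P.comap π) hQn hQY hQX with hc | hc
  · left
    rw [← hPmc, hc, Subgroup.map_eq_bot_iff, hker]
  · right
    rw [← hPmc, hc]; rfl

/-- If the derived subgroup of `G` is nilpotent, then the derived subgroup of `G ⧸ Y`
centralizes the chief factor `X/Y`. -/
private lemma commutator_centralizes (hnil : Group.IsNilpotent ↥(commutator G))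
    (Y X : Subgroup G) [Y.Normal] [X.Normal] (hchief : IsChiefFactor Y X) :
    ⁅commutator (G ⧸ Y), factor Y X⁆ = ⊥ := by
  set π := QuotientGroup.mk' Y with hπ
  have hsurj : Function.Surjective π := QuotientGroup.mk'_surjective Y
  have hKnormal : (factor Y X).Normal := Subgroup.Normal.map inferInstance π hsurj
  have hKne : factor Y X ≠ ⊥ := by
    obtain ⟨x, hxX, hxY⟩ := SetLike.exists_of_lt hchief.2.2.1
    intro hb
    have hx : π x ∈ factor Y X := ⟨x, hxX, rfl⟩
    rw [hb, Subgroup.mem_bot] at hx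
    exact hxY ((QuotientGroup.eq_one_iff x).mp hx)
  have hNmap : (commutator G).map π = commutator (G ⧸ Y) := by
    rw [commutator_def, commutator_def, Subgroup.map_commutator,
      Subgroup.map_top_of_surjective π hsurj]
  have hNnil : Group.IsNilpotent ↥(commutator (G ⧸ Y)) := by
    rw [← hNmap]
    exact @nilpotent_of_surjective _ _ _ _ hnil (π.subgroupMap (commutator G))
      (π.subgroupMap_surjective (commutator G))
  set K := factor Y X with hK
  set N := commutator (G ⧸ Y)
  have hJle : ⁅N, K⁆ ≤ K := Subgroup.commutator_le_right N K
  have hJn : (⁅N, K⁆).Normal := Subgroup.commutator_normal N K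
  rcases chief_min Y X hchief ⁅N, K⁆ hJn hJle with hJ | hJ
  · exact hJ
  · replace hJ : ⁅N, K⁆ = K := hJ.trans hK.symm
    exfalso
    have hInormal : (K ⊓ N).Normal := Subgroup.normal_inf_normal K N
    rcases chief_min Y X hchief (K ⊓ N) hInormal inf_le_left with hI | hI
    <;> [skip; replace hI : K ⊓ N = K := hI.trans hK.symm]
    · have hKN : K ≤ N := by
        calc K = ⁅N, K⁆ := hJ.symm
          _ ≤ N := Subgroup.commutator_le_left N K
      have : K = K ⊓ N := (inf_eq_left.mpr hKN).symm
      exact hKne (this.trans hI)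
    · have hKN : K ≤ N := by rw [← hI]; exact inf_le_right
      exact hKne (aux_nilpotent_eq_bot N K hNnil hKN hJ)

end AuxProofs

/-- Let `G` be a finite solvable group with nilpotent derived subgroup.  If
`X/Y` is a complemented (non-Frattini) chief factor of `G`, viewed as an
irreducible `G`-module, then `dim_{End_G(X/Y)} (X/Y) = 1`: every
`End_G(X/Y)`-subspace of `X/Y` containing a nonzero vector is all of `X/Y`. -/
theorem dim_one_of_nilpotent_derived
    (G : Type*) [Group G] [Finite G] [Group.IsSolvable G]
    (hnil : Group.IsNilpotent ↥(commutator G))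
    (Y X : Subgroup G) [Y.Normal] [X.Normal]
    (hchief : IsChiefFactor Y X) (hcompl : IsComplemented' Y X) :
    ∀ a ∈ factor Y X, a ≠ 1 →
      ∀ W : Subgroup (G ⧸ Y), W ≤ factor Y X → IsFSub Y X W → a ∈ W →
        W = factor Y X := by
  intro a ha hane W hWle hWF haW
  have hcentbot := commutator_centralizes hnil Y X hchief
  have hcent : ∀ c ∈ commutator (G ⧸ Y), ∀ x ∈ factor Y X, c * x * c⁻¹ = x := by
    intro c hc x hx
    have : ⁅c, x⁆ ∈ (⊥ : Subgroup (G ⧸ Y)) := by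
      rw [← hcentbot]; exact Subgroup.commutator_mem_commutator hc hx
    rw [Subgroup.mem_bot, commutatorElement_eq_one_iff_mul_comm] at this
    rw [this, mul_assoc, mul_inv_cancel, mul_one]
  have hKnormal : (factor Y X).Normal :=
    Subgroup.Normal.map inferInstance (QuotientGroup.mk' Y) (QuotientGroup.mk'_surjective Y)
  -- conjugation by any `q` is a `G`-endomorphism of the factor
  have hend : ∀ q : G ⧸ Y, IsGEnd Y X (fun x => q * x * q⁻¹) := by
    intro q
    refine ⟨fun b hb => hKnormal.conj_mem b hb q, fun b c _ _ => by group, ?_⟩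
    intro q' b hb
    show q * (q' * b * q'⁻¹) * q⁻¹ = q' * (q * b * q⁻¹) * q'⁻¹
    have hc : ⁅q⁻¹, q'⁻¹⁆ ∈ commutator (G ⧸ Y) :=
      Subgroup.commutator_mem_commutator (Subgroup.mem_top _) (Subgroup.mem_top _)
    have hcb := hcent _ hc b hb
    simp only [commutatorElement_def, inv_inv] at hcb
    calc q * (q' * b * q'⁻¹) * q⁻¹
        = q' * q * (q⁻¹ * q'⁻¹ * q * q' * b * (q⁻¹ * q'⁻¹ * q * q')⁻¹) * q⁻¹ * q'⁻¹ := by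
          group
      _ = q' * q * b * q⁻¹ * q'⁻¹ := by rw [hcb]
      _ = q' * (q * b * q⁻¹) * q'⁻¹ := by group
  -- hence `W` contains every conjugate of `a`
  have hconj : ∀ q : G ⧸ Y, q * a * q⁻¹ ∈ W := fun q => hWF _ (hend q) a haW
  -- the normal closure of `a` is contained in `W`
  have hncW : Subgroup.normalClosure {a} ≤ W := by
    rw [Subgroup.normalClosure]
    refine (Subgroup.closure_le W).mpr ?_
    intro b hb
    rcases Group.mem_conjugatesOfSet_iff.mp hb with ⟨c, hc, hcb⟩
    rcases Set.mem_singleton_iff.mp hc ▸ isConj_iff.mp hcb with ⟨q, hq⟩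
    rw [Set.mem_singleton_iff] at hc
    subst hc
    exact hq ▸ hconj q
  have hncK : Subgroup.normalClosure {a} ≤ factor Y X :=
    Subgroup.normalClosure_le_normal (Set.singleton_subset_iff.mpr ha)
  have hane' : Subgroup.normalClosure {a} ≠ ⊥ := by
    intro hb
    have : a ∈ Subgroup.normalClosure {a} := Subgroup.subset_normalClosure rfl
    rw [hb, Subgroup.mem_bot] at this
    exact hane this
  rcases chief_min Y X hchief (Subgroup.normalClosure {a})
      Subgroup.normalClosure_normal hncK with h | h
  · exact absurd h hane'
  · exact le_antisymm hWle (h ▸ hncW)
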